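/- Let k > 0, c ∈ (-k, 0), λ ∈ [-1,1], y₊ = (k+√(k²-c²))/(-c), and 0 < d < √(k²-c²)/(3|c|). Suppose R > 0 satisfies (3/d)·(|λ+1|·(y₊+d)² + |λ-1|)·R < √(k²-c²) and 6·|λ+1|·(y₊+d)·R < √(k²-c²). Then for all r ∈ (0, R] and y, z ∈ [y₊ - d, y₊ + d]: (c - (λ+1)r)·(y + z) + 2k ≤ -√(k² - c²). -/

import Mathlib

open Real Set

/-- Coefficient estimate: under the smallness conditions on R, for all
r ∈ (0, R] and y, z ∈ [y₊ - d, y₊ + d] one has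
(c - (λ+1)r)·(y + z) + 2k ≤ -√(k² - c²). -/
theorem stmt_17 (k c lam d R : ℝ) (hk : 0 < k) (hc₁ : -k < c) (hc₂ : c < 0)
    (hlam : lam ∈ Icc (-1 : ℝ) 1)
    (yplus : ℝ) (hy : yplus = (k + Real.sqrt (k ^ 2 - c ^ 2)) / (-c))
    (hd₀ : 0 < d) (hd₁ : d < Real.sqrt (k ^ 2 - c ^ 2) / (3 * |c|))
    (hR₀ : 0 < R)
    (hR₁ : (3 / d) * (|lam + 1| * (yplus + d) ^ 2 + |lam - 1|) * R
      < Real.sqrt (k ^ 2 - c ^ 2))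
    (hR₂ : 6 * |lam + 1| * (yplus + d) * R < Real.sqrt (k ^ 2 - c ^ 2)) :
    ∀ r ∈ Ioc (0 : ℝ) R, ∀ y ∈ Icc (yplus - d) (yplus + d),
      ∀ z ∈ Icc (yplus - d) (yplus + d),
        (c - (lam + 1) * r) * (y + z) + 2 * k ≤ -Real.sqrt (k ^ 2 - c ^ 2) := by
  intro r hr y hyy z hzz
  have habs : |c| = -c := abs_of_neg hc₂
  set s := Real.sqrt (k ^ 2 - c ^ 2) with hs
  have hs2 : s ^ 2 = k ^ 2 - c ^ 2 := Real.sq_sqrt (by nlinarith)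
  have hs0 : 0 < s := Real.sqrt_pos.mpr (by nlinarith)
  have hcy : c * yplus = -(k + s) := by
    rw [hy]; field_simp [hc₂.ne]
  have hd1' : 3 * (-c) * d < s := by
    rw [habs, lt_div_iff₀ (by nlinarith : (0:ℝ) < 3 * (-c))] at hd₁
    linarith
  -- yplus > 3d hence y + z ≥ 2(yplus - d) ≥ 0
  have hyp3d : 3 * d < yplus := by nlinarith
  have hypos : 0 ≤ y + z := by
    have := hyy.1; have := hzz.1; linarith
  have hlam1 : 0 ≤ lam + 1 := by linarith [hlam.1]
  have hterm : 0 ≤ (lam + 1) * r * (y + z) :=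
    mul_nonneg (mul_nonneg hlam1 hr.1.le) hypos
  have hcz : c * (y + z) ≤ 2 * c * (yplus - d) := by
    nlinarith [hyy.1, hzz.1]
  nlinarith [hterm, hcz]
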